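/- For a quadratic field k of discriminant d and a fractional ideal 𝔞 of k coprime to d, if the absolute norm N𝔞 equals the norm N(α) of some element α ∈ k×, then for every prime p dividing d the Hilbert symbol (N𝔞, d)_p equals +1. -/

import Mathlib

open NumberField
open scoped nonZeroDivisors
open Matrix

private lemma hilbert_aux {a d v q : ℚ} (hd : d ≠ 0) (hq : q ≠ 0)
    (h : 4 * a + d * q ^ 2 = v ^ 2) :
    ∃ x y : ℚ, a * x ^ 2 + d * y ^ 2 = 1 := by
  rcases eq_or_ne v 0 with hv | hv
  · refine ⟨(1 - 1/d)/q, (1 + 1/d)/2, ?_⟩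
    subst hv
    have ha : a = -(d * q ^ 2) / 4 := by linarith
    rw [ha]
    field_simp
    ring
  · refine ⟨2/v, q/v, ?_⟩
    field_simp
    linear_combination h

private lemma hecke_key (k : Type*) [Field k] [NumberField k] (h2 : Module.finrank ℚ k = 2)
    (d : ℤ) (hd : d = NumberField.discr k)
    (α : k) (hα : α ≠ 0) (hmem : α ∉ Set.range (algebraMap ℚ k)) :
    ∃ x y : ℚ, (Algebra.norm ℚ α : ℚ) * x ^ 2 + (d : ℚ) * y ^ 2 = 1 := by
  have hli : LinearIndependent ℚ ![(1 : k), α] := by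
    rw [LinearIndependent.pair_iff' one_ne_zero]
    intro s hs
    exact hmem ⟨s, by simpa [Algebra.smul_def] using hs⟩
  have hcard : Fintype.card (Fin 2) = Module.finrank ℚ k := by simp [h2]
  let b : Module.Basis (Fin 2) ℚ k := basisOfLinearIndependentOfCardEqFinrank hli hcard
  have hb : ⇑b = ![(1:k), α] := coe_basisOfLinearIndependentOfCardEqFinrank _ _
  have hb0 : b 0 = 1 := by rw [hb]; rfl
  have hb1 : b 1 = α := by rw [hb]; rfl
  set u := b.repr (α ^ 2) 0 with hu
  set v := b.repr (α ^ 2) 1 with hv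
  have hα2 : α ^ 2 = algebraMap ℚ k u + algebraMap ℚ k v * α := by
    conv_lhs => rw [← b.sum_repr (α ^ 2)]
    rw [Fin.sum_univ_two, hb0, hb1, Algebra.smul_def, Algebra.smul_def, mul_one]
  have hrα : b.repr α = Finsupp.single 1 1 := by rw [← hb1]; exact b.repr_self 1
  have ht1 : Algebra.trace ℚ k 1 = 2 := by
    rw [show (1:k) = algebraMap ℚ k 1 from (_root_.map_one _).symm, Algebra.trace_algebraMap, h2]
    simp
  have hM : Algebra.leftMulMatrix b α = !![0, u; 1, v] := by
    ext i j
    fin_cases i <;> fin_cases j <;>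
      simp [Algebra.leftMulMatrix_eq_repr_mul, hb0, hb1, hrα, ← sq, ← hu, ← hv]
  have hnα : Algebra.norm ℚ α = -u := by
    rw [Algebra.norm_eq_matrix_det b, hM, Matrix.det_fin_two_of]; ring
  have htα : Algebra.trace ℚ k α = v := by
    rw [Algebra.trace_eq_matrix_trace b, hM, Matrix.trace_fin_two_of, zero_add]
  have htα2 : Algebra.trace ℚ k (α ^ 2) = 2 * u + v * v := by
    rw [hα2, map_add, Algebra.trace_algebraMap, ← Algebra.smul_def, _root_.map_smul, htα, h2]
    simp [smul_eq_mul]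
  have hTM : Algebra.traceMatrix ℚ ⇑b = !![2, v; v, 2 * u + v * v] := by
    ext i j
    rw [Algebra.traceMatrix_apply, Algebra.traceForm_apply]
    fin_cases i <;> fin_cases j <;>
      simp [hb0, hb1, ← sq, htα, htα2, ht1]
  have hdiscr : Algebra.discr ℚ ⇑b = 4 * u + v ^ 2 := by
    rw [Algebra.discr_def, hTM, Matrix.det_fin_two_of]; ring
  -- change of basis
  let ib := (NumberField.integralBasis k).reindex ((NumberField.integralBasis k).indexEquiv b)
  set q := (ib.toMatrix ⇑b).det with hqdef
  have hvec : ⇑b = ⇑ib ᵥ* ((ib.toMatrix ⇑b).map (algebraMap ℚ k)) :=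
    (ib.toMatrix_map_vecMul ⇑b).symm
  have hchange : Algebra.discr ℚ ⇑b = q ^ 2 * Algebra.discr ℚ ⇑ib := by
    conv_lhs => rw [hvec]
    exact Algebra.discr_of_matrix_vecMul ⇑ib _
  have hib : Algebra.discr ℚ ⇑ib = (d : ℚ) := by
    rw [hd, NumberField.coe_discr, Module.Basis.coe_reindex]
    exact Algebra.discr_reindex _ _ _
  have hdne : (d : ℚ) ≠ 0 := by
    rw [hd]; exact_mod_cast NumberField.discr_ne_zero k
  have hbne : Algebra.discr ℚ ⇑b ≠ 0 := Algebra.discr_not_zero_of_basis ℚ b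
  have hqne : q ≠ 0 := by
    intro h
    rw [hchange, h] at hbne
    simp at hbne
  have key : 4 * (Algebra.norm ℚ α) + (d : ℚ) * q ^ 2 = v ^ 2 := by
    rw [hnα]
    have := hchange
    rw [hdiscr, hib] at this
    linarith [this]
  exact hilbert_aux hdne hqne key


/-- Hecke: if the absolute norm of a fractional ideal `𝔞` of a quadratic field `k`
(coprime to the discriminant `d`) is the norm of an element of `k×`, then the quadratic
Hilbert symbol `(N𝔞, d)_p` equals `+1` for every prime `p ∣ d`. -/
theorem hecke_principal_genus_norm_condition
    (k : Type*) [Field k] [NumberField k] (h2 : Module.finrank ℚ k = 2)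
    (d : ℤ) (hd : d = NumberField.discr k)
    (𝔞 : FractionalIdeal (𝓞 k)⁰ k) (h𝔞 : 𝔞 ≠ 0)
    (hcopnum : IsCoprime (FractionalIdeal.absNorm 𝔞).num d)
    (hcopden : IsCoprime ((FractionalIdeal.absNorm 𝔞).den : ℤ) d)
    (hnorm : ∃ α : k, α ≠ 0 ∧ FractionalIdeal.absNorm 𝔞 = Algebra.norm ℚ α) :
    ∀ (p : ℕ) [Fact p.Prime], (p : ℤ) ∣ d →
      ∃ x y : ℚ_[p], (FractionalIdeal.absNorm 𝔞 : ℚ_[p]) * x ^ 2 + (d : ℚ_[p]) * y ^ 2 = 1 := by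

  intro p _ _
  obtain ⟨α, hα, ha⟩ := hnorm
  suffices h : ∃ x y : ℚ, (FractionalIdeal.absNorm 𝔞 : ℚ) * x ^ 2 + (d : ℚ) * y ^ 2 = 1 by
    obtain ⟨x, y, hxy⟩ := h
    refine ⟨(x : ℚ_[p]), (y : ℚ_[p]), ?_⟩
    exact_mod_cast congrArg (Rat.cast : ℚ → ℚ_[p]) hxy
  rw [ha]
  by_cases hmem : α ∈ Set.range (algebraMap ℚ k)
  · obtain ⟨s, rfl⟩ := hmem
    have hs : s ≠ 0 := fun h => hα (by simp [h])
    rw [Algebra.norm_algebraMap, h2]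
    exact ⟨s⁻¹, 0, by field_simp; ring⟩
  · exact hecke_key k h2 d hd α hα hmem
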